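/- arXiv:1901.03384 — 4 statements merged into one kernel-verified Lean document; each statement's English description precedes it below -/
import Mathlib

section
/- For λ > 0 and m ≥ 1, the functions s(λ) = ((-1)^m (2m-1)!/√λ)(sin λ − Σ_{j=0}^{m-1} (-1)^j λ^(2j+1)/(2j+1)!) and t(λ) = ((-1)^(m+1) (2m)!/√λ)(cos λ − Σ_{j=0}^{m} (-1)^j λ^(2j)/(2j)!) satisfy the differential relation t'(λ) + t(λ)/(2λ) = 2m · s(λ) for all λ > 0. -/
open Real Finset

noncomputable def sFun (m : ℕ) (z : ℝ) : ℝ :=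
  ((-1 : ℝ) ^ m * (Nat.factorial (2 * m - 1)) / Real.sqrt z) *
    (Real.sin z - ∑ j ∈ Finset.range m,
        (-1 : ℝ) ^ j * z ^ (2 * j + 1) / (Nat.factorial (2 * j + 1)))

noncomputable def tFun (m : ℕ) (z : ℝ) : ℝ :=
  ((-1 : ℝ) ^ (m + 1) * (Nat.factorial (2 * m)) / Real.sqrt z) *
    (Real.cos z - ∑ j ∈ Finset.range (m + 1),
        (-1 : ℝ) ^ j * z ^ (2 * j) / (Nat.factorial (2 * j)))

theorem stmt_6 (m : ℕ) (hm : 1 ≤ m) (lam : ℝ) (hlam : 0 < lam) :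
    HasDerivAt (tFun m) (2 * m * sFun m lam - tFun m lam / (2 * lam)) lam := by
  set A := Real.sqrt lam with hAdef
  have hA : 0 < A := Real.sqrt_pos.mpr hlam
  have hA2 : A ^ 2 = lam := Real.sq_sqrt hlam.le
  set C : ℝ := (-1 : ℝ) ^ (m + 1) * (Nat.factorial (2 * m)) with hCdef
  -- derivative of the sum
  have hsum : HasDerivAt
      (fun z : ℝ => ∑ j ∈ Finset.range (m + 1),
        (-1 : ℝ) ^ j * z ^ (2 * j) / (Nat.factorial (2 * j)))
      (∑ j ∈ Finset.range (m + 1),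
        (((2 * j : ℕ) : ℝ) * lam ^ (2 * j - 1)) * (-1 : ℝ) ^ j / (Nat.factorial (2 * j))) lam := by
    apply HasDerivAt.fun_sum
    intro j _
    have h := ((hasDerivAt_pow (2 * j) lam).const_mul ((-1 : ℝ) ^ j)).div_const
      ((Nat.factorial (2 * j) : ℝ))
    refine h.congr_deriv ?_
    ring
  have hDsum : (∑ j ∈ Finset.range (m + 1),
        (((2 * j : ℕ) : ℝ) * lam ^ (2 * j - 1)) * (-1 : ℝ) ^ j / (Nat.factorial (2 * j)))
      = - ∑ j ∈ Finset.range m,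
        (-1 : ℝ) ^ j * lam ^ (2 * j + 1) / (Nat.factorial (2 * j + 1)) := by
    rw [Finset.sum_range_succ']
    simp only [Nat.mul_zero, Nat.cast_zero, zero_mul, Nat.factorial_zero, pow_zero]
    rw [← Finset.sum_neg_distrib]
    have : (0 : ℝ) * lam ^ (2 * 0 - 1) * 1 / 1 = 0 := by norm_num
    rw [add_comm]
    simp only [Nat.cast_zero, zero_mul, zero_div, zero_add]
    apply Finset.sum_congr rfl
    intro i _
    have h1 : 2 * (i + 1) - 1 = 2 * i + 1 := by omega
    have h2 : 2 * (i + 1) = (2 * i + 1) + 1 := by omega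
    have h3 : (Nat.factorial (2 * (i + 1)) : ℝ)
        = ((2 * i + 1 : ℕ) + 1) * (Nat.factorial (2 * i + 1)) := by
      rw [h2, Nat.factorial_succ]; push_cast; ring
    have hfpos : (0 : ℝ) < (Nat.factorial (2 * i + 1) : ℝ) := by
      exact_mod_cast Nat.factorial_pos _
    rw [h1, h3, pow_succ]
    push_cast
    field_simp
    ring
  have hg : HasDerivAt
      (fun z : ℝ => Real.cos z - ∑ j ∈ Finset.range (m + 1),
        (-1 : ℝ) ^ j * z ^ (2 * j) / (Nat.factorial (2 * j)))
      (-(Real.sin lam - ∑ j ∈ Finset.range m,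
        (-1 : ℝ) ^ j * lam ^ (2 * j + 1) / (Nat.factorial (2 * j + 1)))) lam := by
    have h := (Real.hasDerivAt_cos lam).fun_sub hsum
    rw [hDsum] at h
    refine h.congr_deriv ?_
    ring
  have hAne : A ≠ 0 := hA.ne'
  have hC : HasDerivAt (fun z : ℝ => C / Real.sqrt z)
      ((0 * A - C * (1 / (2 * A))) / A ^ 2) lam :=
    (hasDerivAt_const lam C).div (Real.hasDerivAt_sqrt hlam.ne') hAne
  have hprod := hC.fun_mul hg
  have hfun : (fun z : ℝ => (C / Real.sqrt z) *
      (Real.cos z - ∑ j ∈ Finset.range (m + 1),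
        (-1 : ℝ) ^ j * z ^ (2 * j) / (Nat.factorial (2 * j)))) = tFun m := by
    funext z; simp [tFun, hCdef]
  rw [hfun] at hprod
  refine hprod.congr_deriv ?_
  symm
  -- algebra
  have hfac : ((Nat.factorial (2 * m)) : ℝ) = (2 * m) * ((Nat.factorial (2 * m - 1)) : ℝ) := by
    have h2m : 2 * m - 1 + 1 = 2 * m := by omega
    rw [← h2m, Nat.factorial_succ, h2m]
    push_cast
    ring
  simp only [tFun, sFun, hCdef]
  rw [← hAdef, hfac, ← hA2]
  have hlamne : lam ≠ 0 := hlam.ne'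
  field_simp
  ring
end

section
/- Define S(x) = ∫₀^x sin(π t²/2) dt and C(x) = ∫₀^x cos(π t²/2) dt, and for z > 0 let χ = √(2z/π). Then S₀(z) = √(2π/z) · ( cos(z)(1/2 − S(χ)) − sin(z)(1/2 − C(χ)) ) satisfies z² S₀''(z) + z S₀'(z) + (z² − 1/4) S₀(z) = z for all z > 0. -/
open Real

noncomputable def fresnelS (x : ℝ) : ℝ := ∫ t in (0:ℝ)..x, Real.sin (π * t ^ 2 / 2)
noncomputable def fresnelC (x : ℝ) : ℝ := ∫ t in (0:ℝ)..x, Real.cos (π * t ^ 2 / 2)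

noncomputable def S0 (z : ℝ) : ℝ :=
  Real.sqrt (2 * π / z) *
    (Real.cos z * (1 / 2 - fresnelS (Real.sqrt (2 * z / π)))
      - Real.sin z * (1 / 2 - fresnelC (Real.sqrt (2 * z / π))))

namespace S0aux

noncomputable def A (z : ℝ) : ℝ := 1 / 2 - fresnelS (Real.sqrt (2 * z / π))
noncomputable def B (z : ℝ) : ℝ := 1 / 2 - fresnelC (Real.sqrt (2 * z / π))
noncomputable def q (z : ℝ) : ℝ := 1 / (π * Real.sqrt (2 * z / π))
noncomputable def r (z : ℝ) : ℝ := Real.sqrt (2 * π / z)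
noncomputable def G (z : ℝ) : ℝ := Real.cos z * A z - Real.sin z * B z
noncomputable def H (z : ℝ) : ℝ := Real.sin z * A z + Real.cos z * B z
noncomputable def S0d (z : ℝ) : ℝ := -(r z / (2 * z)) * G z - r z * H z

lemma fresnelS_hasDerivAt (x : ℝ) :
    HasDerivAt fresnelS (Real.sin (π * x ^ 2 / 2)) x := by
  have hc : Continuous fun t : ℝ => Real.sin (π * t ^ 2 / 2) := by continuity
  exact intervalIntegral.integral_hasDerivAt_right (hc.intervalIntegrable _ _)
    (hc.stronglyMeasurableAtFilter _ _) hc.continuousAt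

lemma fresnelC_hasDerivAt (x : ℝ) :
    HasDerivAt fresnelC (Real.cos (π * x ^ 2 / 2)) x := by
  have hc : Continuous fun t : ℝ => Real.cos (π * t ^ 2 / 2) := by continuity
  exact intervalIntegral.integral_hasDerivAt_right (hc.intervalIntegrable _ _)
    (hc.stronglyMeasurableAtFilter _ _) hc.continuousAt

lemma sqrt_ne (z : ℝ) (hz : 0 < z) : Real.sqrt (2 * z / π) ≠ 0 :=
  ne_of_gt (Real.sqrt_pos.2 (by positivity))

lemma chi_hasDerivAt (z : ℝ) (hz : 0 < z) :
    HasDerivAt (fun z => Real.sqrt (2 * z / π)) (q z) z := by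
  have h1 : HasDerivAt (fun z : ℝ => 2 * z / π) (2 / π) z := by
    simpa using ((hasDerivAt_id z).const_mul 2).div_const π
  have h2 := (Real.hasDerivAt_sqrt (ne_of_gt (by positivity : (0:ℝ) < 2 * z / π))).comp z h1
  refine HasDerivAt.congr_deriv h2 (Eq.symm ?_)
  have hs := sqrt_ne z hz
  have hπ := Real.pi_ne_zero
  simp only [q]
  field_simp

lemma sin_arg (z : ℝ) (hz : 0 < z) :
    Real.sin (π * Real.sqrt (2 * z / π) ^ 2 / 2) = Real.sin z := by
  rw [Real.sq_sqrt (by positivity : (0:ℝ) ≤ 2 * z / π)]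
  congr 1
  field_simp

lemma cos_arg (z : ℝ) (hz : 0 < z) :
    Real.cos (π * Real.sqrt (2 * z / π) ^ 2 / 2) = Real.cos z := by
  rw [Real.sq_sqrt (by positivity : (0:ℝ) ≤ 2 * z / π)]
  congr 1
  field_simp

lemma hA (z : ℝ) (hz : 0 < z) : HasDerivAt A (-(Real.sin z * q z)) z := by
  have h := ((fresnelS_hasDerivAt (Real.sqrt (2 * z / π))).comp z (chi_hasDerivAt z hz))
  rw [sin_arg z hz] at h
  exact h.const_sub (1 / 2)

lemma hB (z : ℝ) (hz : 0 < z) : HasDerivAt B (-(Real.cos z * q z)) z := by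
  have h := ((fresnelC_hasDerivAt (Real.sqrt (2 * z / π))).comp z (chi_hasDerivAt z hz))
  rw [cos_arg z hz] at h
  exact h.const_sub (1 / 2)

lemma hG (z : ℝ) (hz : 0 < z) : HasDerivAt G (-H z) z := by
  have h := ((Real.hasDerivAt_cos z).mul (hA z hz)).sub ((Real.hasDerivAt_sin z).mul (hB z hz))
  refine HasDerivAt.congr_deriv h (Eq.symm ?_)
  have : Real.sin z ^ 2 + Real.cos z ^ 2 = 1 := Real.sin_sq_add_cos_sq z
  simp only [H]
  ring

lemma hH (z : ℝ) (hz : 0 < z) : HasDerivAt H (G z - q z) z := by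
  have h := ((Real.hasDerivAt_sin z).mul (hA z hz)).add ((Real.hasDerivAt_cos z).mul (hB z hz))
  refine HasDerivAt.congr_deriv h (Eq.symm ?_)
  have hsc : Real.sin z ^ 2 + Real.cos z ^ 2 = 1 := Real.sin_sq_add_cos_sq z
  simp only [G]
  linear_combination (q z) * hsc

lemma hr (z : ℝ) (hz : 0 < z) : HasDerivAt r (-(r z) / (2 * z)) z := by
  have h1 : HasDerivAt (fun z : ℝ => 2 * π / z) (-(2 * π) / z ^ 2) z := by
    simpa [Pi.div_def] using (hasDerivAt_const z (2 * π)).div (hasDerivAt_id z) (ne_of_gt hz)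
  have h2 := (Real.hasDerivAt_sqrt (ne_of_gt (by positivity : (0:ℝ) < 2 * π / z))).comp z h1
  refine HasDerivAt.congr_deriv h2 (Eq.symm ?_)
  have hs : Real.sqrt (2 * π / z) ≠ 0 := ne_of_gt (Real.sqrt_pos.2 (by positivity))
  have hsq : Real.sqrt (2 * π / z) ^ 2 = 2 * π / z :=
    Real.sq_sqrt (by positivity)
  simp only [r, Function.comp]
  set s := Real.sqrt (2 * π / z) with hsdef
  rw [eq_div_iff hz.ne'] at hsq
  field_simp
  linear_combination (-1) * hsq

lemma hS0 (z : ℝ) (hz : 0 < z) : HasDerivAt S0 (S0d z) z := by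
  have h := (hr z hz).mul (hG z hz)
  have he : S0 = fun z => r z * G z := rfl
  rw [he]
  refine HasDerivAt.congr_deriv h (Eq.symm ?_)
  simp only [S0d]
  ring

lemma hS0d (z : ℝ) (hz : 0 < z) :
    HasDerivAt S0d
      (3 * r z / (4 * z ^ 2) * G z + r z * H z / z - r z * G z + r z * q z) z := by
  have hc : HasDerivAt (fun z => -(r z / (2 * z))) (3 * r z / (4 * z ^ 2)) z := by
    have h := ((hr z hz).div (((hasDerivAt_id z).const_mul 2)) (by positivity)).neg
    refine HasDerivAt.congr_deriv h (Eq.symm ?_)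
    simp only [id]
    field_simp
    ring
  have h := (hc.mul (hG z hz)).sub ((hr z hz).mul (hH z hz))
  have he : S0d = fun z => -(r z / (2 * z)) * G z - r z * H z := rfl
  rw [he]
  refine HasDerivAt.congr_deriv h (Eq.symm ?_)
  field_simp
  ring

lemma hrq (z : ℝ) (hz : 0 < z) : r z * q z = 1 / z := by
  have h2 : Real.sqrt (2 * π / z) * Real.sqrt (2 * z / π) = 2 := by
    rw [← Real.sqrt_mul (by positivity)]
    rw [show 2 * π / z * (2 * z / π) = 4 by field_simp; ring]
    rw [show (4:ℝ) = 2 ^ 2 by norm_num, Real.sqrt_sq (by norm_num)]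
  have hs := sqrt_ne z hz
  have hπ := Real.pi_pos
  have hb2 : Real.sqrt (2 * z / π) ^ 2 = 2 * z / π := Real.sq_sqrt (by positivity)
  have ha : Real.sqrt (2 * π / z) = 2 / Real.sqrt (2 * z / π) := by
    rw [eq_div_iff hs]; exact h2
  simp only [r, q]
  rw [ha]
  have : 2 / Real.sqrt (2 * z / π) * (1 / (π * Real.sqrt (2 * z / π)))
      = 2 / (π * Real.sqrt (2 * z / π) ^ 2) := by ring
  rw [this, hb2]
  rw [show π * (2 * z / π) = 2 * z by field_simp]
  rw [one_div, eq_comm, inv_eq_iff_eq_inv, eq_comm]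
  field_simp

end S0aux

theorem stmt_10 (z : ℝ) (hz : 0 < z) :
    z ^ 2 * deriv (deriv S0) z + z * deriv S0 z + (z ^ 2 - 1 / 4) * S0 z = z := by
  open S0aux in
  have he : deriv S0 =ᶠ[nhds z] S0d :=
    (eventually_nhds_iff.2 ⟨Set.Ioi 0, fun x hx => (hS0 x hx).deriv, isOpen_Ioi, hz⟩)
  have h2 : deriv (deriv S0) z = 3 * r z / (4 * z ^ 2) * G z + r z * H z / z - r z * G z + r z * q z := by
    rw [Filter.EventuallyEq.deriv_eq he]
    exact (hS0d z hz).deriv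
  have h1 : deriv S0 z = S0d z := (hS0 z hz).deriv
  have h0 : S0 z = r z * G z := rfl
  have hq := hrq z hz
  rw [h2, h1, h0]
  simp only [S0d]
  have hzne : z ≠ 0 := ne_of_gt hz
  field_simp at hq ⊢
  linear_combination (8 * z) * hq
end

section
/- For every positive real λ and every nonnegative integer m, ∫₀¹ z^(4m) sin(λ z²) dz = ((-1)^m Γ(2m+1/2) / (2 λ^(2m))) · ( √(2/λ) · S(√(2λ/π)) − sin(λ) Σ_{j=0}^{m-1} (−1)^j λ^(2j)/Γ(2j+3/2) + λ cos(λ) Σ_{j=0}^{m-1} (−1)^j λ^(2j)/Γ(2j+5/2) ). -/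
open Real Finset

-- base case
lemma base_int (lam : ℝ) (hlam : 0 < lam) :
    ∫ z in (0:ℝ)..1, Real.sin (lam * z ^ 2) =
      Real.sqrt (π / (2 * lam)) * fresnelS (Real.sqrt (2 * lam / π)) := by
  have hpi : (0:ℝ) < π := Real.pi_pos
  set c := Real.sqrt (2 * lam / π) with hc
  have hc0 : 0 < c := Real.sqrt_pos.mpr (by positivity)
  have hc2 : c ^ 2 = 2 * lam / π := Real.sq_sqrt (by positivity)
  have key : ∀ z : ℝ, Real.sin (lam * z ^ 2) = Real.sin (π * (z * c) ^ 2 / 2) := by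
    intro z
    congr 1
    rw [mul_pow, hc2]
    field_simp
  calc ∫ z in (0:ℝ)..1, Real.sin (lam * z ^ 2)
      = ∫ z in (0:ℝ)..1, Real.sin (π * (z * c) ^ 2 / 2) := by
        simp_rw [key]
    _ = c⁻¹ • ∫ t in (0*c:ℝ)..(1*c), Real.sin (π * t ^ 2 / 2) :=
        intervalIntegral.integral_comp_mul_right (fun t => Real.sin (π * t ^ 2 / 2)) hc0.ne'
    _ = Real.sqrt (π / (2 * lam)) * fresnelS c := by
        rw [zero_mul, one_mul, smul_eq_mul, fresnelS]
        congr 1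
        rw [hc, ← Real.sqrt_inv]
        congr 1
        field_simp

lemma cont_int (lam : ℝ) (k : ℕ) :
    IntervalIntegrable (fun z : ℝ => z ^ k * Real.sin (lam * z ^ 2)) MeasureTheory.volume 0 1 :=
  (Continuous.mul (continuous_pow k) (Real.continuous_sin.comp (by fun_prop))).intervalIntegrable _ _

lemma recur (lam : ℝ) (hlam : 0 < lam) (m : ℕ) :
    ∫ z in (0:ℝ)..1, z ^ (4 * (m+1)) * Real.sin (lam * z ^ 2) =
      -Real.cos lam / (2*lam) + (4*m+3) * Real.sin lam / (4*lam^2)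
        - ((4*m+3)*(4*m+1)/(4*lam^2)) * ∫ z in (0:ℝ)..1, z ^ (4 * m) * Real.sin (lam * z ^ 2) := by
  have hl : lam ≠ 0 := hlam.ne'
  set F : ℝ → ℝ := fun z => -z^(4*m+3) * Real.cos (lam*z^2)/(2*lam)
      + ((4*m+3:ℕ):ℝ)*z^(4*m+1)*Real.sin (lam*z^2)/(4*lam^2) with hF
  have hderiv : ∀ z ∈ Set.uIcc (0:ℝ) 1, HasDerivAt F
      (z ^ (4*(m+1)) * Real.sin (lam*z^2)
        + ((4*m+3)*(4*m+1)/(4*lam^2)) * (z ^ (4*m) * Real.sin (lam*z^2))) z := by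
    intro z _
    have hq : HasDerivAt (fun z : ℝ => lam * z^2) (lam * (2 * z^1)) z :=
      (hasDerivAt_pow 2 z).const_mul lam
    have hs : HasDerivAt (fun z : ℝ => Real.sin (lam*z^2)) (Real.cos (lam*z^2) * (lam*(2*z^1))) z :=
      (Real.hasDerivAt_sin _).comp z hq
    have hcs : HasDerivAt (fun z : ℝ => Real.cos (lam*z^2)) (-Real.sin (lam*z^2) * (lam*(2*z^1))) z :=
      (Real.hasDerivAt_cos _).comp z hq
    have hp1 : HasDerivAt (fun z : ℝ => z^(4*m+3)) (((4*m+3:ℕ):ℝ) * z^(4*m+2)) z := by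
      have := hasDerivAt_pow (4*m+3) z
      simpa using this
    have hp2 : HasDerivAt (fun z : ℝ => z^(4*m+1)) (((4*m+1:ℕ):ℝ) * z^(4*m)) z := by
      have := hasDerivAt_pow (4*m+1) z
      simpa using this
    have h1 : HasDerivAt (fun z : ℝ => -z^(4*m+3) * Real.cos (lam*z^2)/(2*lam))
        ((-(((4*m+3:ℕ):ℝ) * z^(4*m+2)) * Real.cos (lam*z^2)
          + (-z^(4*m+3)) * (-Real.sin (lam*z^2) * (lam*(2*z^1)))) / (2*lam)) z :=
      ((hp1.neg.mul hcs)).div_const _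
    have h2 : HasDerivAt (fun z : ℝ => ((4*m+3:ℕ):ℝ)*z^(4*m+1)*Real.sin (lam*z^2)/(4*lam^2))
        (((((4*m+3:ℕ):ℝ) * (((4*m+1:ℕ):ℝ) * z^(4*m))) * Real.sin (lam*z^2)
          + (((4*m+3:ℕ):ℝ)*z^(4*m+1)) * (Real.cos (lam*z^2) * (lam*(2*z^1)))) / (4*lam^2)) z :=
      ((hp2.const_mul _).mul hs).div_const _
    have := h1.add h2
    refine this.congr_deriv ?_
    push_cast
    field_simp
    ring
  have hint : IntervalIntegrable (fun z : ℝ => z ^ (4*(m+1)) * Real.sin (lam*z^2)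
        + ((4*m+3)*(4*m+1)/(4*lam^2)) * (z ^ (4*m) * Real.sin (lam*z^2)))
      MeasureTheory.volume 0 1 :=
    (cont_int lam _).add ((cont_int lam _).const_mul _)
  have hftc := intervalIntegral.integral_eq_sub_of_hasDerivAt hderiv hint
  rw [intervalIntegral.integral_add (cont_int lam _) ((cont_int lam _).const_mul _),
    intervalIntegral.integral_const_mul] at hftc
  have hF1 : F 1 = -Real.cos lam/(2*lam) + ((4*m+3:ℕ):ℝ)*Real.sin lam/(4*lam^2) := by
    simp [hF]
  have hF0 : F 0 = 0 := by
    simp [hF]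
  rw [hF1, hF0, sub_zero] at hftc
  push_cast at hftc ⊢
  linarith

theorem stmt_12 (lam : ℝ) (hlam : 0 < lam) (m : ℕ) :
    ∫ z in (0:ℝ)..1, z ^ (4 * m) * Real.sin (lam * z ^ 2) =
      ((-1 : ℝ) ^ m * Real.Gamma (2 * m + 1 / 2) / (2 * lam ^ (2 * m))) *
        (Real.sqrt (2 / lam) * fresnelS (Real.sqrt (2 * lam / π))
          - Real.sin lam *
              ∑ j ∈ Finset.range m, (-1 : ℝ) ^ j * lam ^ (2 * j) / Real.Gamma (2 * j + 3 / 2)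
          + lam * Real.cos lam *
              ∑ j ∈ Finset.range m, (-1 : ℝ) ^ j * lam ^ (2 * j) / Real.Gamma (2 * j + 5 / 2)) := by
  have hl : lam ≠ 0 := hlam.ne'
  induction m with
  | zero =>
      have h0 : ∫ z in (0:ℝ)..1, z ^ (4*0) * Real.sin (lam * z ^ 2)
          = Real.sqrt (π/(2*lam)) * fresnelS (Real.sqrt (2*lam/π)) := by
        simp only [Nat.mul_zero, pow_zero, one_mul]
        exact base_int lam hlam
      rw [h0]
      simp only [Nat.cast_zero, mul_zero, zero_add, pow_zero, one_pow, one_mul, mul_one,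
        Finset.range_zero, Finset.sum_empty, sub_zero, add_zero]
      rw [Real.Gamma_one_half_eq]
      rw [show Real.sqrt π / 2 * (Real.sqrt (2/lam) * fresnelS (Real.sqrt (2*lam/π)))
          = (Real.sqrt π * Real.sqrt (2/lam) / 2) * fresnelS (Real.sqrt (2*lam/π)) by ring]
      congr 1
      rw [← Real.sqrt_mul Real.pi_pos.le]
      rw [show π * (2/lam) = (π/(2*lam)) * 4 by field_simp; ring]
      rw [Real.sqrt_mul (by positivity), show (4:ℝ) = 2^2 by norm_num,
        Real.sqrt_sq (by norm_num)]
      ring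
  | succ m ih =>
      have hm0 : (0:ℝ) < 2*(m:ℝ)+1/2 := by positivity
      have hm1 : (0:ℝ) < 2*(m:ℝ)+3/2 := by positivity
      have hG : 0 < Real.Gamma (2*(m:ℝ)+1/2) := Real.Gamma_pos_of_pos hm0
      have e1 : Real.Gamma (2*(m:ℝ)+3/2) = (2*(m:ℝ)+1/2) * Real.Gamma (2*(m:ℝ)+1/2) := by
        rw [show (2*(m:ℝ)+3/2) = (2*(m:ℝ)+1/2)+1 by ring, Real.Gamma_add_one hm0.ne']
      have e2 : Real.Gamma (2*(m:ℝ)+5/2) = (2*(m:ℝ)+3/2) * ((2*(m:ℝ)+1/2) * Real.Gamma (2*(m:ℝ)+1/2)) := by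
        rw [show (2*(m:ℝ)+5/2) = (2*(m:ℝ)+3/2)+1 by ring, Real.Gamma_add_one hm1.ne', e1]
      rw [recur lam hlam m, ih, Finset.sum_range_succ, Finset.sum_range_succ]
      push_cast
      rw [show 2*((m:ℝ)+1)+1/2 = 2*(m:ℝ)+5/2 by ring]
      rw [e2, e1]
      rw [show 2*(m+1) = 2*m+2 by ring, pow_add]
      set G := Real.Gamma (2*(m:ℝ)+1/2) with hGdef
      set A := Real.sqrt (2/lam) * fresnelS (Real.sqrt (2*lam/π)) with hA
      set S1 := ∑ j ∈ Finset.range m, (-1:ℝ) ^ j * lam ^ (2 * j) / Real.Gamma (2 * j + 3 / 2) with hS1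
      set S2 := ∑ j ∈ Finset.range m, (-1:ℝ) ^ j * lam ^ (2 * j) / Real.Gamma (2 * j + 5 / 2) with hS2
      set P := lam ^ (2*m) with hP
      have hPne : P ≠ 0 := pow_ne_zero _ hl
      have hGne : G ≠ 0 := hG.ne'
      rcases Nat.even_or_odd m with hpar | hpar
      · simp only [hpar.neg_one_pow, hpar.add_one.neg_one_pow]
        field_simp
        ring
      · simp only [hpar.neg_one_pow, hpar.add_one.neg_one_pow]
        field_simp
        ring
end

section
/- For every positive real λ and every nonnegative integer m, ∫₀¹ z^(4m+2) cos(λ z²) dz = ((-1)^(m+1) Γ(2m+3/2) / (2 λ^(2m+1))) · ( √(2/λ) · S(√(2λ/π)) + λ cos(λ) Σ_{j=0}^{m-1} (−λ²)^j/Γ(2j+5/2) − sin(λ) Σ_{j=0}^{m} (−λ²)^j/Γ(2j+3/2) ). -/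
open Real Finset intervalIntegral

-- integration by parts for cos
lemma parts_cos (lam : ℝ) (hlam : lam ≠ 0) (k : ℕ) :
    ∫ z in (0:ℝ)..1, z ^ (k+2) * Real.cos (lam * z ^ 2) =
      Real.sin lam / (2*lam) -
        (((k:ℝ)+1)/(2*lam)) * ∫ z in (0:ℝ)..1, z ^ k * Real.sin (lam * z ^ 2) := by
  have hu : ∀ x ∈ Set.uIcc (0:ℝ) 1,
      HasDerivAt (fun z : ℝ => z ^ (k+1)) (((k:ℝ)+1) * x ^ k) x := by
    intro x _
    have := hasDerivAt_pow (k+1) x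
    simpa [Nat.add_sub_cancel] using this
  have hv : ∀ x ∈ Set.uIcc (0:ℝ) 1,
      HasDerivAt (fun z : ℝ => Real.sin (lam * z ^ 2) / (2*lam))
        (x * Real.cos (lam * x ^ 2)) x := by
    intro x _
    have h1 : HasDerivAt (fun z : ℝ => lam * z ^ 2) (lam * (2*x)) x := by
      simpa using (hasDerivAt_pow 2 x).const_mul lam
    have h2 := (h1.sin).div_const (2*lam)
    refine h2.congr_deriv ?_
    rw [div_eq_iff (mul_ne_zero two_ne_zero hlam)]
    ring
  have hint1 : IntervalIntegrable (fun x : ℝ => ((k:ℝ)+1) * x ^ k) MeasureTheory.volume 0 1 :=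
    (Continuous.intervalIntegrable (by continuity) 0 1)
  have hint2 : IntervalIntegrable (fun x : ℝ => x * Real.cos (lam * x ^ 2)) MeasureTheory.volume 0 1 :=
    (Continuous.intervalIntegrable (by continuity) 0 1)
  have key := intervalIntegral.integral_mul_deriv_eq_deriv_mul hu hv hint1 hint2
  have hL : (∫ x in (0:ℝ)..1, x ^ (k+1) * (x * Real.cos (lam * x ^ 2)))
      = ∫ z in (0:ℝ)..1, z ^ (k+2) * Real.cos (lam * z ^ 2) := by
    apply intervalIntegral.integral_congr
    intro x _
    ring
  have hR : (∫ x in (0:ℝ)..1, (((k:ℝ)+1) * x ^ k) * (Real.sin (lam * x ^ 2) / (2*lam)))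
      = (((k:ℝ)+1)/(2*lam)) * ∫ z in (0:ℝ)..1, z ^ k * Real.sin (lam * z ^ 2) := by
    rw [← intervalIntegral.integral_const_mul]
    apply intervalIntegral.integral_congr
    intro x _
    ring
  rw [hL, hR] at key
  rw [key]
  norm_num

lemma parts_sin (lam : ℝ) (hlam : lam ≠ 0) (k : ℕ) :
    ∫ z in (0:ℝ)..1, z ^ (k+2) * Real.sin (lam * z ^ 2) =
      -(Real.cos lam / (2*lam)) +
        (((k:ℝ)+1)/(2*lam)) * ∫ z in (0:ℝ)..1, z ^ k * Real.cos (lam * z ^ 2) := by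
  have hu : ∀ x ∈ Set.uIcc (0:ℝ) 1,
      HasDerivAt (fun z : ℝ => z ^ (k+1)) (((k:ℝ)+1) * x ^ k) x := by
    intro x _
    have := hasDerivAt_pow (k+1) x
    simpa [Nat.add_sub_cancel] using this
  have hv : ∀ x ∈ Set.uIcc (0:ℝ) 1,
      HasDerivAt (fun z : ℝ => -Real.cos (lam * z ^ 2) / (2*lam))
        (x * Real.sin (lam * x ^ 2)) x := by
    intro x _
    have h1 : HasDerivAt (fun z : ℝ => lam * z ^ 2) (lam * (2*x)) x := by
      simpa using (hasDerivAt_pow 2 x).const_mul lam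
    have h2 := ((h1.cos).neg).div_const (2*lam)
    refine h2.congr_deriv ?_
    rw [div_eq_iff (mul_ne_zero two_ne_zero hlam)]
    ring
  have hint1 : IntervalIntegrable (fun x : ℝ => ((k:ℝ)+1) * x ^ k) MeasureTheory.volume 0 1 :=
    (Continuous.intervalIntegrable (by continuity) 0 1)
  have hint2 : IntervalIntegrable (fun x : ℝ => x * Real.sin (lam * x ^ 2)) MeasureTheory.volume 0 1 :=
    (Continuous.intervalIntegrable (by continuity) 0 1)
  have key := intervalIntegral.integral_mul_deriv_eq_deriv_mul hu hv hint1 hint2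
  have hL : (∫ x in (0:ℝ)..1, x ^ (k+1) * (x * Real.sin (lam * x ^ 2)))
      = ∫ z in (0:ℝ)..1, z ^ (k+2) * Real.sin (lam * z ^ 2) := by
    apply intervalIntegral.integral_congr
    intro x _
    ring
  have hR : (∫ x in (0:ℝ)..1, (((k:ℝ)+1) * x ^ k) * (-Real.cos (lam * x ^ 2) / (2*lam)))
      = -((((k:ℝ)+1)/(2*lam)) * ∫ z in (0:ℝ)..1, z ^ k * Real.cos (lam * z ^ 2)) := by
    rw [← intervalIntegral.integral_const_mul, ← intervalIntegral.integral_neg]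
    apply intervalIntegral.integral_congr
    intro x _
    ring
  rw [hL, hR] at key
  rw [key]
  norm_num
  ring


lemma fresnel_sub (lam : ℝ) (hlam : 0 < lam) :
    (∫ t in (0:ℝ)..Real.sqrt (2*lam/π), Real.sin (π * t ^ 2 / 2)) =
      Real.sqrt (2*lam/π) * ∫ z in (0:ℝ)..1, Real.sin (lam * z ^ 2) := by
  have hπ := Real.pi_pos
  set c := Real.sqrt (2*lam/π) with hcdef
  have hcpos : 0 < c := Real.sqrt_pos.mpr (by positivity)
  have hc : c ≠ 0 := hcpos.ne'
  have hc2 : c ^ 2 = 2*lam/π := Real.sq_sqrt (by positivity)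
  have key : ∀ t : ℝ, Real.sin (π * t ^ 2 / 2) = Real.sin (lam * (t * c⁻¹) ^ 2) := by
    intro t
    congr 1
    rw [mul_pow, inv_pow, hc2]
    field_simp
  calc (∫ t in (0:ℝ)..c, Real.sin (π * t ^ 2 / 2))
      = ∫ t in (0:ℝ)..c, (fun z => Real.sin (lam * z ^ 2)) (t * c⁻¹) := by
        simp only [key]
    _ = (c⁻¹)⁻¹ • ∫ x in (0:ℝ)*c⁻¹..c*c⁻¹, Real.sin (lam * x ^ 2) :=
        intervalIntegral.integral_comp_mul_right (fun z => Real.sin (lam * z ^ 2)) (inv_ne_zero hc)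
    _ = c * ∫ z in (0:ℝ)..1, Real.sin (lam * z ^ 2) := by
        rw [inv_inv, zero_mul, mul_inv_cancel₀ hc, smul_eq_mul]

theorem stmt_13 (lam : ℝ) (hlam : 0 < lam) (m : ℕ) :
    ∫ z in (0:ℝ)..1, z ^ (4 * m + 2) * Real.cos (lam * z ^ 2) =
      ((-1 : ℝ) ^ (m + 1) * Real.Gamma (2 * m + 3 / 2) / (2 * lam ^ (2 * m + 1))) *
        (Real.sqrt (2 / lam) * fresnelS (Real.sqrt (2 * lam / π))
          + lam * Real.cos lam *
              ∑ j ∈ Finset.range m, (-(lam ^ 2)) ^ j / Real.Gamma (2 * j + 5 / 2)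
          - Real.sin lam *
              ∑ j ∈ Finset.range (m + 1), (-(lam ^ 2)) ^ j / Real.Gamma (2 * j + 3 / 2)) := by
  have hπ := Real.pi_pos
  have hlam' : lam ≠ 0 := hlam.ne'
  have hsπ : Real.sqrt π ≠ 0 := by positivity
  induction m with
  | zero =>
      have P := parts_cos lam hlam' 0
      rw [show 0 + 2 = 4*0+2 from rfl] at P
      rw [P]
      have hJ : (∫ z in (0:ℝ)..1, z ^ 0 * Real.sin (lam * z ^ 2))
          = ∫ z in (0:ℝ)..1, Real.sin (lam * z ^ 2) := by
        apply intervalIntegral.integral_congr; intro x _; simp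
      rw [hJ]
      have hF : fresnelS (Real.sqrt (2 * lam / π))
          = Real.sqrt (2*lam/π) * ∫ z in (0:ℝ)..1, Real.sin (lam * z ^ 2) :=
        fresnel_sub lam hlam
      rw [hF]
      have h48 : Real.sqrt (2/lam) * Real.sqrt (2*lam/π) = 2 / Real.sqrt π := by
        rw [← Real.sqrt_mul (by positivity), show (2/lam)*(2*lam/π) = 4/π by
          field_simp; ring, show (4:ℝ)/π = (2/Real.sqrt π)^2 by
            rw [div_pow, Real.sq_sqrt hπ.le]; norm_num]
        exact Real.sqrt_sq (by positivity)
      have hG32 : Real.Gamma (3/2 : ℝ) = Real.sqrt π / 2 := by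
        have h := Real.Gamma_add_one (show (1/2:ℝ) ≠ 0 by norm_num)
        rw [show (1/2:ℝ)+1 = 3/2 by norm_num] at h
        rw [h, Real.Gamma_one_half_eq]
        ring
      have h48' : Real.sqrt 2 / Real.sqrt lam * Real.sqrt (2*lam/π) = 2 / Real.sqrt π := by
        rw [← Real.sqrt_div (by norm_num : (0:ℝ) ≤ 2)]
        exact h48
      norm_num [Finset.sum_range_zero, Finset.sum_range_one]
      rw [hG32]
      rw [show Real.sqrt 2 / Real.sqrt lam * (Real.sqrt (2*lam/π) * (∫ z in (0:ℝ)..1, Real.sin (lam*z^2)))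
            = (Real.sqrt 2 / Real.sqrt lam * Real.sqrt (2*lam/π)) * (∫ z in (0:ℝ)..1, Real.sin (lam*z^2)) by ring,
         h48']
      field_simp
      ring
  | succ m IH =>
      have P1 := parts_cos lam hlam' (4*m+4)
      rw [show 4*m+4+2 = 4*(m+1)+2 from by omega] at P1
      have P2 := parts_sin lam hlam' (4*m+2)
      rw [show 4*m+2+2 = 4*m+4 from by omega] at P2
      rw [IH] at P2
      rw [P1, P2]
      -- Gamma recurrences
      have hg0 : (0:ℝ) < 2*(m:ℝ)+3/2 := by positivity
      have hg1 : (0:ℝ) < 2*(m:ℝ)+5/2 := by positivity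
      have e1 : Real.Gamma (2*(m:ℝ)+5/2) = (2*(m:ℝ)+3/2) * Real.Gamma (2*(m:ℝ)+3/2) := by
        have h := Real.Gamma_add_one hg0.ne'
        rw [show 2*(m:ℝ)+3/2+1 = 2*(m:ℝ)+5/2 by ring] at h
        exact h
      have e2 : Real.Gamma (2*(m:ℝ)+7/2) = (2*(m:ℝ)+5/2) * Real.Gamma (2*(m:ℝ)+5/2) := by
        have h := Real.Gamma_add_one hg1.ne'
        rw [show 2*(m:ℝ)+5/2+1 = 2*(m:ℝ)+7/2 by ring] at h
        exact h
      have hGpos : (0:ℝ) < Real.Gamma (2*(m:ℝ)+3/2) := Real.Gamma_pos_of_pos hg0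
      -- split the sums in the goal
      rw [Finset.sum_range_succ (fun j => (-(lam ^ 2)) ^ j / Real.Gamma (2 * (j:ℝ) + 5 / 2)) m]
      rw [Finset.sum_range_succ (fun j => (-(lam ^ 2)) ^ j / Real.Gamma (2 * (j:ℝ) + 3 / 2)) (m+1)]
      push_cast
      rw [show 2*((m:ℝ)+1)+3/2 = 2*(m:ℝ)+7/2 by ring]
      rw [e2, e1]
      set A := Real.sqrt (2 / lam) * fresnelS (Real.sqrt (2 * lam / π)) with hA
      set Sc := ∑ j ∈ Finset.range m, (-(lam ^ 2)) ^ j / Real.Gamma (2 * (j:ℝ) + 5 / 2) with hSc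
      set Ss := ∑ j ∈ Finset.range (m+1), (-(lam ^ 2)) ^ j / Real.Gamma (2 * (j:ℝ) + 3 / 2) with hSs
      set g := Real.Gamma (2*(m:ℝ)+3/2) with hg
      rcases Nat.even_or_odd m with hm | hm
      · have h1 : ((-1:ℝ))^m = 1 := hm.neg_one_pow
        simp only [neg_pow, pow_succ, h1]
        field_simp
        ring
      · have h1 : ((-1:ℝ))^m = -1 := hm.neg_one_pow
        simp only [neg_pow, pow_succ, h1]
        field_simp
        ring
end
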